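/- Let θ* be the minimum-distance estimate: any parameter satisfying U_{θ*}(Zⁿ) < inf_θ U_θ(Zⁿ) + 1/n, where U_θ(Zⁿ) = sup_{A ∈ 𝒜_n} |P_θ(A) − P_{Zⁿ}(A)| and 𝒜_n is the Yatracos class of all sets {xⁿ : p_θ(xⁿ) > p_{θ′}(xⁿ)}. Then for the true parameter θ₀, the variational distance satisfies d(P_{θ*}, P_{θ₀}) ≤ 4 U_{θ₀}(Zⁿ) + 3/n. -/
import Mathlib


open MeasureTheory
open scoped ENNReal NNReal

/-- Variational distance: supremum over finite measurable partitions of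
`∑ i |P(Aᵢ) - Q(Aᵢ)|`. -/
noncomputable def varDist {Z : Type*} [MeasurableSpace Z] (P Q : Measure Z) : ℝ :=
  sSup {x : ℝ | ∃ (n : ℕ) (A : Fin n → Set Z),
    (∀ i, MeasurableSet (A i)) ∧ Pairwise (Function.onFun Disjoint A) ∧
    (⋃ i, A i) = Set.univ ∧ x = ∑ i, |(P (A i)).toReal - (Q (A i)).toReal|}

/-- The Yatracos class of a family of densities: all sets `{x : p_θ x > p_θ' x}`,
`θ ≠ θ'`. -/
def yatracos {Λ Xn : Type*} (p : Λ → Xn → ℝ≥0∞) : Set (Set Xn) :=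
  {A | ∃ θ θ' : Λ, θ ≠ θ' ∧ A = {x | p θ' x < p θ x}}

/-- Yatracos distance of a candidate `P_θ` to a (e.g. empirical) measure `ν`:
`U_θ = sup_{A ∈ 𝒜} |P_θ(A) − ν(A)|`. -/
noncomputable def yatDev {Λ Xn : Type*} [MeasurableSpace Xn]
    (p : Λ → Xn → ℝ≥0∞) (Pfam : Λ → Measure Xn) (ν : Measure Xn) (θ : Λ) : ℝ :=
  sSup {r : ℝ | ∃ A ∈ yatracos p, r = |(Pfam θ A).toReal - (ν A).toReal|}

/-- Devroye–Lugosi minimum-distance estimation: if `θ*` is any parameter with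
`U_{θ*} < inf_θ U_θ + 1/n`, then for the true parameter `θ₀`,
`d(P_{θ*}, P_{θ₀}) ≤ 4 U_{θ₀} + 3/n`. -/
lemma sum_toReal_measure {Xn : Type*} [MeasurableSpace Xn] (P : Measure Xn)
    [IsFiniteMeasure P] {m : ℕ} (B : Fin m → Set Xn)
    (hmeas : ∀ i, MeasurableSet (B i)) (hdisj : Pairwise (Function.onFun Disjoint B)) :
    ∑ i, (P (B i)).toReal = (P (⋃ i, B i)).toReal := by
  rw [measure_iUnion hdisj hmeas, tsum_fintype,
    ENNReal.toReal_sum (fun i _ => measure_ne_top P _)]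

lemma partition_sum_le {Xn : Type*} [MeasurableSpace Xn] (μ : Measure Xn)
    (f g : Xn → ℝ≥0∞) (hf : Measurable f) (hg : Measurable g)
    (P Q : Measure Xn) (hP : P = μ.withDensity f) (hQ : Q = μ.withDensity g)
    [IsProbabilityMeasure P] [IsProbabilityMeasure Q]
    {m : ℕ} (A : Fin m → Set Xn) (hmeas : ∀ i, MeasurableSet (A i))
    (hdisj : Pairwise (Function.onFun Disjoint A)) (hcov : (⋃ i, A i) = Set.univ) :
    ∑ i, |(P (A i)).toReal - (Q (A i)).toReal|
      ≤ 2 * ((P {x | g x < f x}).toReal - (Q {x | g x < f x}).toReal) := by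
  set S : Set Xn := {x | g x < f x} with hSdef
  have hS : MeasurableSet S := measurableSet_lt hg hf
  -- pointwise comparison on subsets
  have keyQP : ∀ T : Set Xn, MeasurableSet T → T ⊆ S → Q T ≤ P T := by
    intro T hT hTS
    rw [hP, hQ, withDensity_apply _ hT, withDensity_apply _ hT]
    exact setLIntegral_mono hf (fun x hx => le_of_lt (hTS hx))
  have keyPQ : ∀ T : Set Xn, MeasurableSet T → T ⊆ Sᶜ → P T ≤ Q T := by
    intro T hT hTS
    rw [hP, hQ, withDensity_apply _ hT, withDensity_apply _ hT]
    exact setLIntegral_mono hg (fun x hx => not_lt.mp (hTS hx))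
  have hmeasS : ∀ i, MeasurableSet (A i ∩ S) := fun i => (hmeas i).inter hS
  have hmeasSc : ∀ i, MeasurableSet (A i ∩ Sᶜ) := fun i => (hmeas i).inter hS.compl
  have hdisjS : Pairwise (Function.onFun Disjoint (fun i => A i ∩ S)) :=
    fun i j hij => (hdisj hij).mono Set.inter_subset_left Set.inter_subset_left
  have hdisjSc : Pairwise (Function.onFun Disjoint (fun i => A i ∩ Sᶜ)) :=
    fun i j hij => (hdisj hij).mono Set.inter_subset_left Set.inter_subset_left
  have hcovS : (⋃ i, A i ∩ S) = S := by rw [← Set.iUnion_inter, hcov, Set.univ_inter]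
  have hcovSc : (⋃ i, A i ∩ Sᶜ) = Sᶜ := by rw [← Set.iUnion_inter, hcov, Set.univ_inter]
  have step : ∀ i, |(P (A i)).toReal - (Q (A i)).toReal|
      ≤ ((P (A i ∩ S)).toReal - (Q (A i ∩ S)).toReal)
        + ((Q (A i ∩ Sᶜ)).toReal - (P (A i ∩ Sᶜ)).toReal) := by
    intro i
    have hPsplit : (P (A i)).toReal = (P (A i ∩ S)).toReal + (P (A i ∩ Sᶜ)).toReal := by
      rw [← ENNReal.toReal_add (measure_ne_top P _) (measure_ne_top P _)]
      congr 1
      rw [← measure_inter_add_diff (A i) hS, Set.diff_eq]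
    have hQsplit : (Q (A i)).toReal = (Q (A i ∩ S)).toReal + (Q (A i ∩ Sᶜ)).toReal := by
      rw [← ENNReal.toReal_add (measure_ne_top Q _) (measure_ne_top Q _)]
      congr 1
      rw [← measure_inter_add_diff (A i) hS, Set.diff_eq]
    have h1 : 0 ≤ (P (A i ∩ S)).toReal - (Q (A i ∩ S)).toReal := by
      have := keyQP (A i ∩ S) (hmeasS i) Set.inter_subset_right
      linarith [ENNReal.toReal_mono (measure_ne_top P _) this]
    have h2 : 0 ≤ (Q (A i ∩ Sᶜ)).toReal - (P (A i ∩ Sᶜ)).toReal := by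
      have := keyPQ (A i ∩ Sᶜ) (hmeasSc i) Set.inter_subset_right
      linarith [ENNReal.toReal_mono (measure_ne_top Q _) this]
    rw [hPsplit, hQsplit, abs_le]
    constructor <;> linarith
  calc ∑ i, |(P (A i)).toReal - (Q (A i)).toReal|
      ≤ ∑ i, (((P (A i ∩ S)).toReal - (Q (A i ∩ S)).toReal)
        + ((Q (A i ∩ Sᶜ)).toReal - (P (A i ∩ Sᶜ)).toReal)) :=
        Finset.sum_le_sum (fun i _ => step i)
    _ = 2 * ((P S).toReal - (Q S).toReal) := by
        have e1 : ∑ i, (P (A i ∩ S)).toReal = (P S).toReal := by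
          rw [sum_toReal_measure P _ hmeasS hdisjS, hcovS]
        have e2 : ∑ i, (Q (A i ∩ S)).toReal = (Q S).toReal := by
          rw [sum_toReal_measure Q _ hmeasS hdisjS, hcovS]
        have e3 : ∑ i, (P (A i ∩ Sᶜ)).toReal = (P Sᶜ).toReal := by
          rw [sum_toReal_measure P _ hmeasSc hdisjSc, hcovSc]
        have e4 : ∑ i, (Q (A i ∩ Sᶜ)).toReal = (Q Sᶜ).toReal := by
          rw [sum_toReal_measure Q _ hmeasSc hdisjSc, hcovSc]
        have c1 : (P S).toReal + (P Sᶜ).toReal = 1 := by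
          rw [← ENNReal.toReal_add (measure_ne_top P _) (measure_ne_top P _),
            measure_add_measure_compl hS, measure_univ, ENNReal.toReal_one]
        have c2 : (Q S).toReal + (Q Sᶜ).toReal = 1 := by
          rw [← ENNReal.toReal_add (measure_ne_top Q _) (measure_ne_top Q _),
            measure_add_measure_compl hS, measure_univ, ENNReal.toReal_one]
        rw [Finset.sum_add_distrib, Finset.sum_sub_distrib, Finset.sum_sub_distrib,
          e1, e2, e3, e4]
        linarith

theorem minimum_distance_estimator
    {Λ Xn : Type*} [MeasurableSpace Xn]
    (μ : Measure Xn) [SigmaFinite μ]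
    (p : Λ → Xn → ℝ≥0∞) (hp : ∀ θ, Measurable (p θ))
    (Pfam : Λ → Measure Xn) (hPfam : ∀ θ, Pfam θ = μ.withDensity (p θ))
    (hprob : ∀ θ, IsProbabilityMeasure (Pfam θ))
    (ν : Measure Xn) [IsProbabilityMeasure ν]
    (n : ℕ) (hn : 0 < n)
    (θstar θ₀ : Λ)
    (hstar : yatDev p Pfam ν θstar
      < sInf (Set.range (yatDev p Pfam ν)) + 1 / n) :
    varDist (Pfam θstar) (Pfam θ₀) ≤ 4 * yatDev p Pfam ν θ₀ + 3 / n := by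
  have hn' : (0:ℝ) < 1 / n := by positivity
  haveI := hprob θstar; haveI := hprob θ₀
  -- basic facts about yatDev
  have habs_le_two : ∀ θ : Λ, ∀ r ∈ {r : ℝ | ∃ A ∈ yatracos p,
      r = |(Pfam θ A).toReal - (ν A).toReal|}, r ≤ 2 := by
    rintro θ r ⟨A, -, rfl⟩
    have h1 : (Pfam θ A).toReal ≤ 1 := by
      haveI := hprob θ
      simpa using ENNReal.toReal_mono (by norm_num) (prob_le_one (μ := Pfam θ) (s := A))
    have h2 : (ν A).toReal ≤ 1 := by
      simpa using ENNReal.toReal_mono (by norm_num) (prob_le_one (μ := ν) (s := A))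
    have h3 : 0 ≤ (Pfam θ A).toReal := ENNReal.toReal_nonneg
    have h4 : 0 ≤ (ν A).toReal := ENNReal.toReal_nonneg
    rw [abs_le]; constructor <;> linarith
  have hbdd : ∀ θ : Λ, BddAbove {r : ℝ | ∃ A ∈ yatracos p,
      r = |(Pfam θ A).toReal - (ν A).toReal|} := fun θ => ⟨2, habs_le_two θ⟩
  have hyat_nonneg : ∀ θ, 0 ≤ yatDev p Pfam ν θ := by
    intro θ
    exact Real.sSup_nonneg (by rintro x ⟨A, -, rfl⟩; exact abs_nonneg _)
  have hmem : ∀ θ : Λ, ∀ A ∈ yatracos p,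
      |(Pfam θ A).toReal - (ν A).toReal| ≤ yatDev p Pfam ν θ := by
    intro θ A hA
    exact le_csSup (hbdd θ) ⟨A, hA, rfl⟩
  -- sInf (range yatDev) ≤ yatDev θ₀
  have hinf : sInf (Set.range (yatDev p Pfam ν)) ≤ yatDev p Pfam ν θ₀ :=
    csInf_le ⟨0, by rintro x ⟨θ, rfl⟩; exact hyat_nonneg θ⟩ ⟨θ₀, rfl⟩
  have hstar' : yatDev p Pfam ν θstar < yatDev p Pfam ν θ₀ + 1 / n := by linarith
  -- now bound varDist
  by_cases hne : θstar = θ₀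
  · subst hne
    have : varDist (Pfam θstar) (Pfam θstar) ≤ 0 := by
      refine csSup_le ⟨0, ⟨1, fun _ => Set.univ, fun i => MeasurableSet.univ,
        Subsingleton.pairwise, Set.iUnion_const _, by simp⟩⟩ ?_
      rintro x ⟨m, A, hmeasA, hdisjA, hcovA, rfl⟩
      simp
    have h3n : (0:ℝ) ≤ 3 / n := by positivity
    linarith [hyat_nonneg θstar]
  · set S : Set Xn := {x | p θ₀ x < p θstar x} with hSdef
    have hSyat : S ∈ yatracos p := ⟨θstar, θ₀, hne, rfl⟩
    have hkey : varDist (Pfam θstar) (Pfam θ₀)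
        ≤ 2 * ((Pfam θstar S).toReal - (Pfam θ₀ S).toReal) := by
      refine csSup_le ⟨0, ⟨1, fun _ => Set.univ, fun i => MeasurableSet.univ,
        Subsingleton.pairwise, Set.iUnion_const _, by simp⟩⟩ ?_
      rintro x ⟨m, A, hmeasA, hdisjA, hcovA, rfl⟩
      exact partition_sum_le μ (p θstar) (p θ₀) (hp θstar) (hp θ₀)
        (Pfam θstar) (Pfam θ₀) (hPfam θstar) (hPfam θ₀) A hmeasA hdisjA hcovA
    have htri : (Pfam θstar S).toReal - (Pfam θ₀ S).toReal
        ≤ yatDev p Pfam ν θstar + yatDev p Pfam ν θ₀ := by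
      have t1 := hmem θstar S hSyat
      have t2 := hmem θ₀ S hSyat
      have := abs_sub_le ((Pfam θstar S).toReal) ((ν S).toReal) ((Pfam θ₀ S).toReal)
      have h1 : (Pfam θstar S).toReal - (Pfam θ₀ S).toReal
          ≤ |(Pfam θstar S).toReal - (Pfam θ₀ S).toReal| := le_abs_self _
      have h2 : |(ν S).toReal - (Pfam θ₀ S).toReal|
          = |(Pfam θ₀ S).toReal - (ν S).toReal| := abs_sub_comm _ _
      linarith [abs_sub_le ((Pfam θstar S).toReal) ((ν S).toReal) ((Pfam θ₀ S).toReal)]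
    have h23 : (2:ℝ) / n ≤ 3 / n := by
      apply div_le_div_of_nonneg_right (by norm_num) (by positivity)
    calc varDist (Pfam θstar) (Pfam θ₀)
        ≤ 2 * (yatDev p Pfam ν θstar + yatDev p Pfam ν θ₀) := by linarith
      _ ≤ 4 * yatDev p Pfam ν θ₀ + 3 / n := by
          have : (2:ℝ) * (1/n) = 2/n := by ring
          linarith
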